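/- Suppose in addition that M ≥ 0 satisfies |a − cosh²(x)| ≤ M for all x ∈ [0,X], and that p : [0,X] → ℝ is a nonnegative integrable weight with p(x) ≤ L for all x ∈ [0,X]. Then ∫₀^{X} |R(x)|² · p(x) dx ≤ h⁴ · M² · X⁴ · L · ∫₀^{X} |u(x)|² dx. -/

import Mathlib

open MeasureTheory intervalIntegral Set

private lemma ftc_aux {X : ℝ} (f f' : ℝ → ℝ)
    (hf : ∀ t ∈ Set.Icc (0:ℝ) X, HasDerivWithinAt f (f' t) (Set.Icc 0 X) t)
    (hf' : ContinuousOn f' (Set.Icc 0 X))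
    {x : ℝ} (hx : x ∈ Set.Icc (0:ℝ) X) :
    ∫ t in (0:ℝ)..x, f' t = f x - f 0 := by
  have hsub : Set.Icc (0:ℝ) x ⊆ Set.Icc 0 X := Set.Icc_subset_Icc le_rfl hx.2
  refine intervalIntegral.integral_eq_sub_of_hasDeriv_right_of_le hx.1
    (fun t ht => ((hf t (hsub ht)).continuousWithinAt).mono hsub)
    (fun t ht => ?_) ((hf'.mono hsub).intervalIntegrable_of_Icc hx.1)
  have htX : t ∈ Set.Ioo (0:ℝ) X := ⟨ht.1, lt_of_lt_of_le ht.2 hx.2⟩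
  exact (((hf t ⟨htX.1.le, htX.2.le⟩).hasDerivAt
    (Icc_mem_nhds htX.1 htX.2)).hasDerivWithinAt)

/-- Weighted integral estimate for the Duhamel remainder of the radial Mathieu
equation: if `|a − cosh²(x)| ≤ M` on `[0,X]` and `0 ≤ p ≤ L` is an integrable
weight, then `∫₀^X |R|² p ≤ h⁴ M² X⁴ L ∫₀^X |u|²`,
where `R(x) = u(x) − (u(0) + u'(0)x)`. -/
theorem duhamel_remainder_weighted
    (X : ℝ) (hX : 0 < X) (h a : ℝ)
    (u u' u'' : ℝ → ℝ)
    (hu' : ∀ x ∈ Set.Icc (0:ℝ) X, HasDerivWithinAt u (u' x) (Set.Icc 0 X) x)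
    (hu'' : ∀ x ∈ Set.Icc (0:ℝ) X, HasDerivWithinAt u' (u'' x) (Set.Icc 0 X) x)
    (hu''cont : ContinuousOn u'' (Set.Icc 0 X))
    (hode : ∀ x ∈ Set.Icc (0:ℝ) X,
      u'' x = h ^ 2 * (a - Real.cosh x ^ 2) * u x)
    (M : ℝ) (hM : 0 ≤ M)
    (hMbound : ∀ x ∈ Set.Icc (0:ℝ) X, |a - Real.cosh x ^ 2| ≤ M)
    (p : ℝ → ℝ) (L : ℝ)
    (hpnonneg : ∀ x ∈ Set.Icc (0:ℝ) X, 0 ≤ p x)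
    (hpL : ∀ x ∈ Set.Icc (0:ℝ) X, p x ≤ L)
    (hpint : IntervalIntegrable p MeasureTheory.volume 0 X) :
    (∫ x in (0:ℝ)..X, |u x - (u 0 + u' 0 * x)| ^ 2 * p x)
      ≤ h ^ 4 * M ^ 2 * X ^ 4 * L * ∫ x in (0:ℝ)..X, |u x| ^ 2 := by
  have hIccIcc : Set.uIcc (0:ℝ) X = Set.Icc 0 X := Set.uIcc_of_le hX.le
  have hucont : ContinuousOn u (Set.Icc 0 X) :=
    fun x hx => (hu' x hx).continuousWithinAt
  have hu'cont : ContinuousOn u' (Set.Icc 0 X) :=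
    fun x hx => (hu'' x hx).continuousWithinAt
  have hL0 : 0 ≤ L := le_trans (hpnonneg 0 ⟨le_rfl, hX.le⟩) (hpL 0 ⟨le_rfl, hX.le⟩)
  set I := ∫ t in (0:ℝ)..X, |u t| with hIdef
  set J := ∫ t in (0:ℝ)..X, |u t| ^ 2 with hJdef
  have huabs : ContinuousOn (fun t => |u t|) (Set.Icc 0 X) := hucont.abs
  have hIint : IntervalIntegrable (fun t => |u t|) volume 0 X :=
    huabs.intervalIntegrable_of_Icc hX.le
  have hI0 : 0 ≤ I :=
    intervalIntegral.integral_nonneg hX.le (fun t _ => abs_nonneg _)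
  have hJ0 : 0 ≤ J :=
    intervalIntegral.integral_nonneg hX.le (fun t _ => sq_nonneg _)
  -- |u''| ≤ h^2 M |u|
  have hu''abs : ∀ t ∈ Set.Icc (0:ℝ) X, |u'' t| ≤ h ^ 2 * M * |u t| := by
    intro t ht
    rw [hode t ht, abs_mul, abs_mul, abs_pow, sq_abs]
    exact mul_le_mul_of_nonneg_right
      (mul_le_mul_of_nonneg_left (hMbound t ht) (sq_nonneg h)) (abs_nonneg _)
  -- bound on u' s - u' 0
  have hu'diff : ∀ s ∈ Set.Icc (0:ℝ) X, |u' s - u' 0| ≤ h ^ 2 * M * I := by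
    intro s hs
    have heq : ∫ t in (0:ℝ)..s, u'' t = u' s - u' 0 := ftc_aux u' u'' hu'' hu''cont hs
    rw [← heq]
    have hsub : Set.Icc (0:ℝ) s ⊆ Set.Icc 0 X := Set.Icc_subset_Icc le_rfl hs.2
    calc |∫ t in (0:ℝ)..s, u'' t| ≤ ∫ t in (0:ℝ)..s, |u'' t| :=
          intervalIntegral.abs_integral_le_integral_abs hs.1
      _ ≤ ∫ t in (0:ℝ)..s, h ^ 2 * M * |u t| := by
          refine intervalIntegral.integral_mono_on hs.1
            ((hu''cont.mono hsub).abs.intervalIntegrable_of_Icc hs.1)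
            (((huabs.mono hsub).intervalIntegrable_of_Icc hs.1).const_mul _)
            (fun t ht => hu''abs t (hsub ht))
      _ ≤ ∫ t in (0:ℝ)..X, h ^ 2 * M * |u t| := by
          refine intervalIntegral.integral_mono_interval le_rfl hs.1 hs.2 ?_
            (hIint.const_mul _)
          filter_upwards [ae_restrict_mem measurableSet_Ioc] with t ht
          positivity
      _ = h ^ 2 * M * I := by rw [hIdef, ← intervalIntegral.integral_const_mul]
  -- bound on the remainder
  have hRbound : ∀ x ∈ Set.Icc (0:ℝ) X,
      |u x - (u 0 + u' 0 * x)| ≤ h ^ 2 * M * X * I := by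
    intro x hx
    have hder : ∀ t ∈ Set.Icc (0:ℝ) X,
        HasDerivWithinAt (fun s => u s - (u 0 + u' 0 * s)) (u' t - u' 0)
          (Set.Icc 0 X) t := by
      intro t ht
      have : HasDerivWithinAt (fun s => u 0 + u' 0 * s) (u' 0) (Set.Icc 0 X) t := by
        exact (((hasDerivAt_const t (u 0)).add
          ((hasDerivAt_id t).const_mul (u' 0))).hasDerivWithinAt).congr_deriv (by simp)
      exact (hu' t ht).sub this
    have heq : ∫ s in (0:ℝ)..x, (u' s - u' 0) = u x - (u 0 + u' 0 * x) := by
      have := ftc_aux (fun s => u s - (u 0 + u' 0 * s)) (fun s => u' s - u' 0)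
        hder (hu'cont.sub continuousOn_const) hx
      simpa using this
    rw [← heq]
    have := intervalIntegral.norm_integral_le_of_norm_le_const
      (C := h ^ 2 * M * I) (f := fun s => u' s - u' 0) (a := (0:ℝ)) (b := x)
      (fun s hs => by
        rw [Set.uIoc_of_le hx.1] at hs
        exact hu'diff s ⟨hs.1.le, hs.2.trans hx.2⟩)
    rw [Real.norm_eq_abs] at this
    calc |∫ s in (0:ℝ)..x, (u' s - u' 0)| ≤ h ^ 2 * M * I * |x - 0| := this
      _ ≤ h ^ 2 * M * I * X := by
          rw [sub_zero, abs_of_nonneg hx.1]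
          have : 0 ≤ h ^ 2 * M * I := by positivity
          exact mul_le_mul_of_nonneg_left hx.2 this
      _ = h ^ 2 * M * X * I := by ring
  -- Cauchy–Schwarz : I^2 ≤ X * J
  have hCS : I ^ 2 ≤ X * J := by
    set μ := volume.restrict (Set.Ioc (0:ℝ) X) with hμ
    have hfin : IsFiniteMeasure μ := by
      constructor
      rw [hμ, Measure.restrict_apply_univ]
      exact measure_Ioc_lt_top
    have hmeas : AEStronglyMeasurable (fun t => |u t|) μ :=
      (huabs.mono Set.Ioc_subset_Icc_self).aestronglyMeasurable measurableSet_Ioc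
    obtain ⟨C, hC⟩ := isCompact_Icc.exists_bound_of_continuousOn huabs
    have hmem : MemLp (fun t => |u t|) (ENNReal.ofReal 2) μ := by
      refine MemLp.of_bound hmeas C ?_
      filter_upwards [ae_restrict_mem measurableSet_Ioc] with t ht
      exact hC t (Set.Ioc_subset_Icc_self ht)
    have hone : MemLp (fun _ : ℝ => (1:ℝ)) (ENNReal.ofReal 2) μ := memLp_const 1
    have hpq : Real.HolderConjugate 2 2 := Real.holderConjugate_iff.mpr ⟨one_lt_two, by norm_num⟩
    have key := MeasureTheory.integral_mul_le_Lp_mul_Lq_of_nonneg hpq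
      (f := fun t => |u t|) (g := fun _ => (1:ℝ))
      (Filter.Eventually.of_forall fun t => abs_nonneg _)
      (Filter.Eventually.of_forall fun t => zero_le_one) hmem hone
    simp only [mul_one] at key
    have h1 : ∫ t, |u t| ∂μ = I := by
      rw [hIdef, intervalIntegral.integral_of_le hX.le]
    have h2 : ∫ t, |u t| ^ (2:ℝ) ∂μ = J := by
      rw [hJdef, intervalIntegral.integral_of_le hX.le]
      refine MeasureTheory.integral_congr_ae (Filter.Eventually.of_forall fun t => ?_)
      show |u t| ^ (2:ℝ) = |u t| ^ 2
      rw [Real.rpow_two]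
    have h3 : ∫ t, (1:ℝ) ^ (2:ℝ) ∂μ = X := by
      simp [hμ, Real.one_rpow, Real.volume_Ioc, hX.le,
        ENNReal.toReal_ofReal hX.le]
    rw [h1, h2, h3] at key
    have hIJ : I ≤ J ^ ((1:ℝ)/2) * X ^ ((1:ℝ)/2) := key
    calc I ^ 2 ≤ (J ^ ((1:ℝ)/2) * X ^ ((1:ℝ)/2)) ^ 2 :=
          pow_le_pow_left₀ hI0 hIJ 2
      _ = (J ^ ((1:ℝ)/2)) ^ 2 * (X ^ ((1:ℝ)/2)) ^ 2 := by ring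
      _ = J * X := by
          rw [← Real.rpow_natCast (J ^ ((1:ℝ)/2)) 2, ← Real.rpow_natCast (X ^ ((1:ℝ)/2)) 2,
            ← Real.rpow_mul hJ0, ← Real.rpow_mul hX.le]
          norm_num
      _ = X * J := mul_comm _ _
  -- assemble
  set C := h ^ 2 * M * X * I with hCdef
  have hC0 : 0 ≤ C := by positivity
  have hRcont : ContinuousOn (fun x => |u x - (u 0 + u' 0 * x)| ^ 2) (Set.Icc 0 X) :=
    ((hucont.sub (continuousOn_const.add (continuousOn_const.mul continuousOn_id))).abs.pow 2)
  have hint1 : IntervalIntegrable (fun x => |u x - (u 0 + u' 0 * x)| ^ 2 * p x) volume 0 X :=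
    hpint.continuousOn_mul (hIccIcc ▸ hRcont)
  calc (∫ x in (0:ℝ)..X, |u x - (u 0 + u' 0 * x)| ^ 2 * p x)
      ≤ ∫ x in (0:ℝ)..X, C ^ 2 * p x := by
        refine intervalIntegral.integral_mono_on hX.le hint1 (hpint.const_mul _) ?_
        intro x hx
        have h1 : |u x - (u 0 + u' 0 * x)| ^ 2 ≤ C ^ 2 :=
          pow_le_pow_left₀ (abs_nonneg _) (hRbound x hx) 2
        exact mul_le_mul_of_nonneg_right h1 (hpnonneg x hx)
    _ = C ^ 2 * ∫ x in (0:ℝ)..X, p x := intervalIntegral.integral_const_mul _ _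
    _ ≤ C ^ 2 * (L * X) := by
        refine mul_le_mul_of_nonneg_left ?_ (by positivity)
        calc (∫ x in (0:ℝ)..X, p x) ≤ ∫ x in (0:ℝ)..X, L :=
              intervalIntegral.integral_mono_on hX.le hpint intervalIntegrable_const hpL
          _ = L * X := by simp [mul_comm]
    _ = h ^ 4 * M ^ 2 * X ^ 2 * L * X * I ^ 2 := by rw [hCdef]; ring
    _ ≤ h ^ 4 * M ^ 2 * X ^ 2 * L * X * (X * J) := by
        refine mul_le_mul_of_nonneg_left hCS (by positivity)
    _ = h ^ 4 * M ^ 2 * X ^ 4 * L * J := by ring
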